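/- The class X = Av(2143, 2413, 3142, 3412), defined as the closure of {1} under the operations π ↦ 1 ⊕ π, 1 ⊖ π, π ⊕ 1, π ⊖ 1, is closed under pattern containment: if τ ∈ X and π ≤ τ, then π ∈ X. -/

import Mathlib

open Equiv Filter

/-- A permutation pattern: a size together with a permutation of that size. -/
abbrev Pattern := Σ n : ℕ, Equiv.Perm (Fin n)

/-- Direct sum of permutations: `α` to the left of and below `β`. -/
def sumPerm {m n : ℕ} (α : Equiv.Perm (Fin m)) (β : Equiv.Perm (Fin n)) :
    Equiv.Perm (Fin (m + n)) :=
  finSumFinEquiv.symm.trans ((α.sumCongr β).trans finSumFinEquiv)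

/-- Skew sum of permutations: `α` to the left of and above `β`. -/
def skewPerm {m n : ℕ} (α : Equiv.Perm (Fin m)) (β : Equiv.Perm (Fin n)) :
    Equiv.Perm (Fin (m + n)) :=
  finSumFinEquiv.symm.trans ((α.sumCongr β).trans
    ((Equiv.sumComm (Fin m) (Fin n)).trans (finSumFinEquiv.trans (finCongr (Nat.add_comm n m)))))

/-- Pattern containment: `Contains p q` means `p` is contained (as a pattern) in `q`. -/
def Contains (p q : Pattern) : Prop :=
  ∃ f : Fin p.1 → Fin q.1, StrictMono f ∧ ∀ s t, p.2 s < p.2 t ↔ q.2 (f s) < q.2 (f t)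

def sumP (p q : Pattern) : Pattern := ⟨p.1 + q.1, sumPerm p.2 q.2⟩
def skewP (p q : Pattern) : Pattern := ⟨p.1 + q.1, skewPerm p.2 q.2⟩

/-- The singleton permutation 1. -/
def onePat : Pattern := ⟨1, 1⟩
/-- The increasing permutation of size `k`. -/
def idPat (k : ℕ) : Pattern := ⟨k, 1⟩
/-- The decreasing permutation of size `k`. -/
def revPat (k : ℕ) : Pattern := ⟨k, Fin.revPerm⟩

def BeginsWithMin (p : Pattern) : Prop := ∃ h : 0 < p.1, p.2 ⟨0, h⟩ = ⟨0, h⟩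
def EndsWithMax (p : Pattern) : Prop :=
  ∃ h : 0 < p.1, p.2 ⟨p.1 - 1, by omega⟩ = ⟨p.1 - 1, by omega⟩
def BeginsWithMax (p : Pattern) : Prop :=
  ∃ h : 0 < p.1, p.2 ⟨0, h⟩ = ⟨p.1 - 1, by omega⟩
def EndsWithMin (p : Pattern) : Prop :=
  ∃ h : 0 < p.1, p.2 ⟨p.1 - 1, by omega⟩ = ⟨0, h⟩

def IsIncreasingP (p : Pattern) : Prop := ∀ i j : Fin p.1, i ≤ j → p.2 i ≤ p.2 j
def IsDecreasingP (p : Pattern) : Prop := ∀ i j : Fin p.1, i ≤ j → p.2 j ≤ p.2 i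
/-- Monotone permutations (increasing or decreasing). -/
def MonotoneP (p : Pattern) : Prop := IsIncreasingP p ∨ IsDecreasingP p
/-- A crossed permutation is one that is not monotone. -/
def CrossedP (p : Pattern) : Prop := ¬ MonotoneP p
/-- Positive: size at least 2, begins with its minimum or ends with its maximum. -/
def PositiveP (p : Pattern) : Prop := 2 ≤ p.1 ∧ (BeginsWithMin p ∨ EndsWithMax p)
/-- Negative: size at least 2, begins with its maximum or ends with its minimum. -/
def NegativeP (p : Pattern) : Prop := 2 ≤ p.1 ∧ (BeginsWithMax p ∨ EndsWithMin p)

/-- The class X: the closure of {1} under π ↦ 1⊕π, 1⊖π, π⊕1, π⊖1. -/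
inductive InX : Pattern → Prop
  | base : InX onePat
  | sumL {p : Pattern} : InX p → InX (sumP onePat p)
  | skewL {p : Pattern} : InX p → InX (skewP onePat p)
  | sumR {p : Pattern} : InX p → InX (sumP p onePat)
  | skewR {p : Pattern} : InX p → InX (skewP p onePat)


section Helpers

lemma strictMono_fin_id {n : ℕ} {f : Fin n → Fin n} (hf : StrictMono f) : ∀ i, f i = i := by
  have hinj := hf.injective
  have hsurj : Function.Surjective f := Finite.injective_iff_surjective.mp hinj
  choose g hgf using hsurj
  have hgm : StrictMono g := by
    intro a b hab
    by_contra h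
    push_neg at h
    rcases lt_or_eq_of_le h with h' | h'
    · have := hf h'
      rw [hgf, hgf] at this
      exact absurd hab (not_lt.mpr this.le)
    · have : b = a := by rw [← hgf a, ← hgf b, h']
      exact absurd hab (by omega)
  haveI : WellFoundedLT (Fin n) := Finite.to_wellFoundedLT
  intro i
  have h1 : i ≤ f i := StrictMono.le_apply (β := Fin n) hf
  have h2 : f i ≤ g (f i) := StrictMono.le_apply (β := Fin n) hgm
  have h3 : g (f i) = i := hinj (hgf (f i))
  rw [h3] at h2
  exact le_antisymm h2 h1

lemma sumPerm_left {m n : ℕ} (α : Equiv.Perm (Fin m)) (β : Equiv.Perm (Fin n))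
    (x : Fin (m + n)) (h : (x : ℕ) < m) : ((sumPerm α β) x : ℕ) = (α ⟨x, h⟩ : ℕ) := by
  have hx : x = Fin.castAdd n ⟨x, h⟩ := by ext; rfl
  have h1 : finSumFinEquiv.symm x = Sum.inl (⟨x, h⟩ : Fin m) := by
    conv_lhs => rw [hx]
    exact finSumFinEquiv_symm_apply_castAdd _
  simp [sumPerm, h1]

lemma sumPerm_right {m n : ℕ} (α : Equiv.Perm (Fin m)) (β : Equiv.Perm (Fin n))
    (x : Fin (m + n)) (h : m ≤ (x : ℕ)) :
    ((sumPerm α β) x : ℕ) = m + (β ⟨(x : ℕ) - m, by omega⟩ : ℕ) := by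
  have h1 : finSumFinEquiv.symm x = Sum.inr (⟨(x : ℕ) - m, by omega⟩ : Fin n) := by
    have hx : x = Fin.natAdd m ⟨(x : ℕ) - m, by omega⟩ := by ext; simp; omega
    conv_lhs => rw [hx]
    exact finSumFinEquiv_symm_apply_natAdd _
  simp [sumPerm, h1]

lemma skewPerm_left {m n : ℕ} (α : Equiv.Perm (Fin m)) (β : Equiv.Perm (Fin n))
    (x : Fin (m + n)) (h : (x : ℕ) < m) : ((skewPerm α β) x : ℕ) = n + (α ⟨x, h⟩ : ℕ) := by
  have hx : x = Fin.castAdd n ⟨x, h⟩ := by ext; rfl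
  have h1 : finSumFinEquiv.symm x = Sum.inl (⟨x, h⟩ : Fin m) := by
    conv_lhs => rw [hx]
    exact finSumFinEquiv_symm_apply_castAdd _
  simp [skewPerm, h1, Nat.add_comm]

lemma skewPerm_right {m n : ℕ} (α : Equiv.Perm (Fin m)) (β : Equiv.Perm (Fin n))
    (x : Fin (m + n)) (h : m ≤ (x : ℕ)) :
    ((skewPerm α β) x : ℕ) = (β ⟨(x : ℕ) - m, by omega⟩ : ℕ) := by
  have h1 : finSumFinEquiv.symm x = Sum.inr (⟨(x : ℕ) - m, by omega⟩ : Fin n) := by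
    have hx : x = Fin.natAdd m ⟨(x : ℕ) - m, by omega⟩ := by ext; simp; omega
    conv_lhs => rw [hx]
    exact finSumFinEquiv_symm_apply_natAdd _
  simp [skewPerm, h1, Nat.add_comm]

lemma eq_of_contains {p q : Pattern} (h : Contains p q) (hn : p.1 = q.1) : p = q := by
  obtain ⟨n, σ⟩ := p
  obtain ⟨m, τ⟩ := q
  simp only at hn
  subst hn
  obtain ⟨f, hf, hord⟩ := h
  have hfid : ∀ i, f i = i := strictMono_fin_id hf
  have hg : StrictMono (fun a => τ (σ.symm a)) := by
    intro a b hab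
    have h1 : σ (σ.symm a) < σ (σ.symm b) := by
      rw [Equiv.apply_symm_apply, Equiv.apply_symm_apply]; exact hab
    have := (hord (σ.symm a) (σ.symm b)).mp h1
    rwa [hfid, hfid] at this
  have hgid := strictMono_fin_id hg
  have : τ = σ := by
    ext x
    have := hgid (σ x)
    simp only [Equiv.symm_apply_apply] at this
    exact congrArg Fin.val this
  rw [this]

lemma eq_onePat {p : Pattern} (h : p.1 = 1) : p = onePat := by
  obtain ⟨n, σ⟩ := p
  simp only at h
  subst h
  have : σ = 1 := by
    ext x
    have : σ x = x := Subsingleton.elim _ _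
    simp [this]
  rw [this]
  rfl

lemma size_pos_of_contains {p q : Pattern} (h : Contains p q) (hp : 0 < p.1) : 0 < q.1 := by
  obtain ⟨f, hf, _⟩ := h
  exact (f ⟨0, hp⟩).pos

end Helpers


section ValueLemmas

lemma sumL0 {k : ℕ} (β : Equiv.Perm (Fin k)) (x : Fin (1 + k)) (h : (x : ℕ) = 0) :
    ((sumPerm (1 : Equiv.Perm (Fin 1)) β) x : ℕ) = 0 := by
  rw [sumPerm_left _ _ x (by omega)]
  simpa using h

lemma sumLs {k : ℕ} (β : Equiv.Perm (Fin k)) (x : Fin (1 + k)) (h : 1 ≤ (x : ℕ)) :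
    ((sumPerm (1 : Equiv.Perm (Fin 1)) β) x : ℕ) = 1 + (β ⟨(x : ℕ) - 1, by omega⟩ : ℕ) := by
  rw [sumPerm_right _ _ x h]

lemma skewL0 {k : ℕ} (β : Equiv.Perm (Fin k)) (x : Fin (1 + k)) (h : (x : ℕ) = 0) :
    ((skewPerm (1 : Equiv.Perm (Fin 1)) β) x : ℕ) = k := by
  rw [skewPerm_left _ _ x (by omega)]
  simp

lemma skewLs {k : ℕ} (β : Equiv.Perm (Fin k)) (x : Fin (1 + k)) (h : 1 ≤ (x : ℕ)) :
    ((skewPerm (1 : Equiv.Perm (Fin 1)) β) x : ℕ) = (β ⟨(x : ℕ) - 1, by omega⟩ : ℕ) := by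
  rw [skewPerm_right _ _ x h]

lemma sumRs {k : ℕ} (α : Equiv.Perm (Fin k)) (x : Fin (k + 1)) (h : (x : ℕ) < k) :
    ((sumPerm α (1 : Equiv.Perm (Fin 1))) x : ℕ) = (α ⟨(x : ℕ), h⟩ : ℕ) := by
  rw [sumPerm_left _ _ x h]

lemma sumRl {k : ℕ} (α : Equiv.Perm (Fin k)) (x : Fin (k + 1)) (h : ¬ (x : ℕ) < k) :
    ((sumPerm α (1 : Equiv.Perm (Fin 1))) x : ℕ) = k := by
  rw [sumPerm_right _ _ x (by omega)]
  simp

lemma skewRs {k : ℕ} (α : Equiv.Perm (Fin k)) (x : Fin (k + 1)) (h : (x : ℕ) < k) :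
    ((skewPerm α (1 : Equiv.Perm (Fin 1))) x : ℕ) = 1 + (α ⟨(x : ℕ), h⟩ : ℕ) := by
  rw [skewPerm_left _ _ x h]

lemma skewRl {k : ℕ} (α : Equiv.Perm (Fin k)) (x : Fin (k + 1)) (h : ¬ (x : ℕ) < k) :
    ((skewPerm α (1 : Equiv.Perm (Fin 1))) x : ℕ) = 0 := by
  rw [skewPerm_right _ _ x (by omega)]
  simp

end ValueLemmas

/-- the class X is closed under pattern containment (for nonempty
permutations; the closure of {1} contains no empty permutation). -/
theorem InX_closed_under_containment (p q : Pattern)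
    (hq : InX q) (hpq : Contains p q) (hne : 0 < p.1) : InX p := by
  revert p
  induction hq with
  | base =>
    rintro ⟨n, σ⟩ ⟨f, hf, -⟩ hne
    have hne' : 0 < n := hne
    have hcard := Fintype.card_le_of_injective f hf.injective
    simp only [Fintype.card_fin] at hcard
    have hn1 : n = 1 := by
      have h2 : onePat.1 = 1 := rfl
      omega
    subst hn1
    rw [show (⟨1, σ⟩ : Pattern) = onePat from eq_onePat rfl]
    exact InX.base
  | @sumL r hr ih =>
    rintro ⟨n, σ⟩ ⟨f, hf, hord⟩ hne
    have hne' : 0 < n := hne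
    have hfb : ∀ t : Fin n, (f t : ℕ) < 1 + r.1 := fun t => (f t).2
    have hord' : ∀ s t : Fin n, (σ s : ℕ) < (σ t : ℕ) ↔
        ((sumPerm (1 : Equiv.Perm (Fin 1)) r.2) (f s) : ℕ) <
        ((sumPerm (1 : Equiv.Perm (Fin 1)) r.2) (f t) : ℕ) := fun s t => hord s t
    by_cases h0 : (f ⟨0, hne'⟩ : ℕ) = 0
    · -- the embedding uses the initial minimum of q
      have hfpos : ∀ t : Fin n, t ≠ ⟨0, hne'⟩ → 1 ≤ (f t : ℕ) := by
        intro t ht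
        have h1 : (⟨0, hne'⟩ : Fin n) < t := by
          rw [Fin.lt_def]
          simp only
          have : (t : ℕ) ≠ 0 := fun hh => ht (Fin.ext hh)
          omega
        have h2 := hf h1
        rw [Fin.lt_def] at h2
        omega
      have hmin : ∀ t : Fin n, t ≠ ⟨0, hne'⟩ → (σ ⟨0, hne'⟩ : ℕ) < (σ t : ℕ) := by
        intro t ht
        rw [hord', sumL0 _ _ h0, sumLs _ _ (hfpos t ht)]
        omega
      have hσ0 : (σ ⟨0, hne'⟩ : ℕ) = 0 := by
        obtain ⟨t, ht⟩ := σ.surjective ⟨0, hne'⟩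
        by_cases hti : t = ⟨0, hne'⟩
        · rw [hti] at ht
          rw [ht]
        · have h2 := hmin t hti
          rw [ht] at h2
          simp at h2
      by_cases hn1 : n = 1
      · subst hn1
        rw [show (⟨1, σ⟩ : Pattern) = onePat from eq_onePat rfl]
        exact InX.base
      · have hn2 : 2 ≤ n := by omega
        have hσpos : ∀ t : Fin n, t ≠ ⟨0, hne'⟩ → 1 ≤ (σ t : ℕ) := fun t ht => by
          have := hmin t ht; omega
        have hb : ∀ j : Fin (n - 1), ((j : ℕ) + 1) < n := fun j => by have := j.2; omega
        have hne0 : ∀ j : Fin (n - 1), (⟨(j : ℕ) + 1, hb j⟩ : Fin n) ≠ ⟨0, hne'⟩ := by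
          intro j hh
          have := congrArg Fin.val hh
          simp at this
        have hτb : ∀ j : Fin (n - 1), (σ ⟨(j : ℕ) + 1, hb j⟩ : ℕ) - 1 < n - 1 := by
          intro j
          have h1 := (σ ⟨(j : ℕ) + 1, hb j⟩).2
          have h2 := hσpos _ (hne0 j)
          omega
        have hτinj : Function.Injective
            (fun j : Fin (n - 1) => (⟨(σ ⟨(j : ℕ) + 1, hb j⟩ : ℕ) - 1, hτb j⟩ : Fin (n - 1))) := by
          intro a b hab
          have hab' := congrArg Fin.val hab
          simp only at hab'
          have h1 := hσpos _ (hne0 a)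
          have h2 := hσpos _ (hne0 b)
          have h3 : σ ⟨(a : ℕ) + 1, hb a⟩ = σ ⟨(b : ℕ) + 1, hb b⟩ := Fin.ext (by omega)
          have h4 := congrArg Fin.val (σ.injective h3)
          simp only at h4
          exact Fin.ext (by omega)
        set p' : Pattern :=
          ⟨n - 1, Equiv.ofBijective _ (Finite.injective_iff_bijective.mp hτinj)⟩ with hp'def
        have hp'2 : ∀ j : Fin (n - 1), (p'.2 j : ℕ) = (σ ⟨(j : ℕ) + 1, hb j⟩ : ℕ) - 1 :=
          fun j => rfl
        have hgb : ∀ j : Fin (n - 1), (f ⟨(j : ℕ) + 1, hb j⟩ : ℕ) - 1 < r.1 := by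
          intro j
          have h1 := hfb ⟨(j : ℕ) + 1, hb j⟩
          have h2 := hfpos _ (hne0 j)
          omega
        have hcont : Contains p' r := by
          refine ⟨fun j => ⟨(f ⟨(j : ℕ) + 1, hb j⟩ : ℕ) - 1, hgb j⟩, ?_, ?_⟩
          · intro a b hab
            rw [Fin.lt_def] at hab ⊢
            simp only
            have h1 : (⟨(a : ℕ) + 1, hb a⟩ : Fin n) < ⟨(b : ℕ) + 1, hb b⟩ := by
              rw [Fin.lt_def]; simp only; omega
            have h2 := hf h1
            rw [Fin.lt_def] at h2
            have h3 := hfpos _ (hne0 a)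
            omega
          · intro s t
            rw [Fin.lt_def, Fin.lt_def, hp'2, hp'2]
            have hs1 := hσpos _ (hne0 s)
            have ht1 := hσpos _ (hne0 t)
            have e1 : (σ ⟨(s : ℕ) + 1, hb s⟩ : ℕ) - 1 < (σ ⟨(t : ℕ) + 1, hb t⟩ : ℕ) - 1 ↔
                (σ ⟨(s : ℕ) + 1, hb s⟩ : ℕ) < (σ ⟨(t : ℕ) + 1, hb t⟩ : ℕ) := by omega
            rw [e1, hord', sumLs _ _ (hfpos _ (hne0 s)), sumLs _ _ (hfpos _ (hne0 t))]
            simp only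
            omega
        have hcast : n = 1 + (n - 1) := by omega
        have hvf : ∀ x : Fin n,
            ((sumPerm (1 : Equiv.Perm (Fin 1)) p'.2) (Fin.cast hcast x) : ℕ) = (σ x : ℕ) := by
          intro x
          by_cases hx : (x : ℕ) = 0
          · rw [sumL0 _ _ (by simpa using hx)]
            have hxe : x = ⟨0, hne'⟩ := Fin.ext hx
            rw [hxe, hσ0]
          · rw [sumLs _ _ (by simp only [Fin.coe_cast]; omega)]
            rw [hp'2]
            have hxe : (⟨((⟨(Fin.cast hcast x : ℕ) - 1, by
                have := x.2; simp only [Fin.coe_cast]; omega⟩ : Fin (n - 1)) : ℕ) + 1,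
                hb _⟩ : Fin n) = x := Fin.ext (by simp only [Fin.coe_cast]; omega)
            rw [hxe]
            have := hσpos x (fun hh => hx (congrArg Fin.val hh))
            omega
        have heq : (⟨n, σ⟩ : Pattern) = sumP onePat p' := by
          apply eq_of_contains
          · refine ⟨fun x => Fin.cast hcast x, fun a b hab => hab, ?_⟩
            intro s t
            show σ s < σ t ↔ (sumPerm (1 : Equiv.Perm (Fin 1)) p'.2) (Fin.cast hcast s) <
              (sumPerm (1 : Equiv.Perm (Fin 1)) p'.2) (Fin.cast hcast t)
            rw [Fin.lt_def, Fin.lt_def, hvf s, hvf t]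
          · show n = 1 + (n - 1)
            omega
        rw [heq]
        exact InX.sumL (ih p' hcont (by show 0 < n - 1; omega))
    · -- the embedding avoids position 0 of q
      have hfpos : ∀ t : Fin n, 1 ≤ (f t : ℕ) := by
        intro t
        have h1 : f ⟨0, hne'⟩ ≤ f t := hf.monotone (by rw [Fin.le_def]; simp)
        rw [Fin.le_def] at h1
        omega
      apply ih ⟨n, σ⟩ ?_ hne
      refine ⟨fun t => ⟨(f t : ℕ) - 1, by have := hfb t; have := hfpos t; omega⟩, ?_, ?_⟩
      · intro a b hab
        have h1 := hf hab
        rw [Fin.lt_def] at h1 ⊢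
        simp only
        have := hfpos a
        omega
      · intro s t
        show σ s < σ t ↔ _
        rw [Fin.lt_def, Fin.lt_def, hord', sumLs _ _ (hfpos s), sumLs _ _ (hfpos t)]
        simp only
        omega
  | @skewL r hr ih =>
    rintro ⟨n, σ⟩ ⟨f, hf, hord⟩ hne
    have hne' : 0 < n := hne
    have hfb : ∀ t : Fin n, (f t : ℕ) < 1 + r.1 := fun t => (f t).2
    have hord' : ∀ s t : Fin n, (σ s : ℕ) < (σ t : ℕ) ↔
        ((skewPerm (1 : Equiv.Perm (Fin 1)) r.2) (f s) : ℕ) <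
        ((skewPerm (1 : Equiv.Perm (Fin 1)) r.2) (f t) : ℕ) := fun s t => hord s t
    by_cases h0 : (f ⟨0, hne'⟩ : ℕ) = 0
    · have hfpos : ∀ t : Fin n, t ≠ ⟨0, hne'⟩ → 1 ≤ (f t : ℕ) := by
        intro t ht
        have h1 : (⟨0, hne'⟩ : Fin n) < t := by
          rw [Fin.lt_def]
          simp only
          have : (t : ℕ) ≠ 0 := fun hh => ht (Fin.ext hh)
          omega
        have h2 := hf h1
        rw [Fin.lt_def] at h2
        omega
      have hmax : ∀ t : Fin n, t ≠ ⟨0, hne'⟩ → (σ t : ℕ) < (σ ⟨0, hne'⟩ : ℕ) := by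
        intro t ht
        rw [hord', skewL0 _ _ h0, skewLs _ _ (hfpos t ht)]
        exact (r.2 _).2
      have hσ0 : (σ ⟨0, hne'⟩ : ℕ) = n - 1 := by
        obtain ⟨t, ht⟩ := σ.surjective ⟨n - 1, by omega⟩
        have hval := congrArg Fin.val ht
        simp only at hval
        by_cases hti : t = ⟨0, hne'⟩
        · rw [hti] at hval
          omega
        · have h2 := hmax t hti
          have h3 := (σ ⟨0, hne'⟩).2
          omega
      by_cases hn1 : n = 1
      · subst hn1
        rw [show (⟨1, σ⟩ : Pattern) = onePat from eq_onePat rfl]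
        exact InX.base
      · have hn2 : 2 ≤ n := by omega
        have hb : ∀ j : Fin (n - 1), ((j : ℕ) + 1) < n := fun j => by have := j.2; omega
        have hne0 : ∀ j : Fin (n - 1), (⟨(j : ℕ) + 1, hb j⟩ : Fin n) ≠ ⟨0, hne'⟩ := by
          intro j hh
          have := congrArg Fin.val hh
          simp at this
        have hτb : ∀ j : Fin (n - 1), (σ ⟨(j : ℕ) + 1, hb j⟩ : ℕ) < n - 1 := by
          intro j
          have h2 := hmax _ (hne0 j)
          omega
        have hτinj : Function.Injective
            (fun j : Fin (n - 1) => (⟨(σ ⟨(j : ℕ) + 1, hb j⟩ : ℕ), hτb j⟩ : Fin (n - 1))) := by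
          intro a b hab
          have hab' := congrArg Fin.val hab
          simp only at hab'
          have h3 : σ ⟨(a : ℕ) + 1, hb a⟩ = σ ⟨(b : ℕ) + 1, hb b⟩ := Fin.ext (by omega)
          have h4 := congrArg Fin.val (σ.injective h3)
          simp only at h4
          exact Fin.ext (by omega)
        set p' : Pattern :=
          ⟨n - 1, Equiv.ofBijective _ (Finite.injective_iff_bijective.mp hτinj)⟩ with hp'def
        have hp'2 : ∀ j : Fin (n - 1), (p'.2 j : ℕ) = (σ ⟨(j : ℕ) + 1, hb j⟩ : ℕ) :=
          fun j => rfl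
        have hgb : ∀ j : Fin (n - 1), (f ⟨(j : ℕ) + 1, hb j⟩ : ℕ) - 1 < r.1 := by
          intro j
          have h1 := hfb ⟨(j : ℕ) + 1, hb j⟩
          have h2 := hfpos _ (hne0 j)
          omega
        have hcont : Contains p' r := by
          refine ⟨fun j => ⟨(f ⟨(j : ℕ) + 1, hb j⟩ : ℕ) - 1, hgb j⟩, ?_, ?_⟩
          · intro a b hab
            rw [Fin.lt_def] at hab ⊢
            simp only
            have h1 : (⟨(a : ℕ) + 1, hb a⟩ : Fin n) < ⟨(b : ℕ) + 1, hb b⟩ := by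
              rw [Fin.lt_def]; simp only; omega
            have h2 := hf h1
            rw [Fin.lt_def] at h2
            have h3 := hfpos _ (hne0 a)
            omega
          · intro s t
            rw [Fin.lt_def, Fin.lt_def, hp'2, hp'2]
            rw [hord', skewLs _ _ (hfpos _ (hne0 s)), skewLs _ _ (hfpos _ (hne0 t))]
        have hcast : n = 1 + (n - 1) := by omega
        have hvf : ∀ x : Fin n,
            ((skewPerm (1 : Equiv.Perm (Fin 1)) p'.2) (Fin.cast hcast x) : ℕ) = (σ x : ℕ) := by
          intro x
          by_cases hx : (x : ℕ) = 0
          · rw [skewL0 _ _ (by simpa using hx)]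
            have hxe : x = ⟨0, hne'⟩ := Fin.ext hx
            rw [hxe, hσ0]
          · rw [skewLs _ _ (by simp only [Fin.coe_cast]; omega)]
            rw [hp'2]
            have hxe : (⟨((⟨(Fin.cast hcast x : ℕ) - 1, by
                have := x.2; simp only [Fin.coe_cast]; omega⟩ : Fin (n - 1)) : ℕ) + 1,
                hb _⟩ : Fin n) = x := Fin.ext (by simp only [Fin.coe_cast]; omega)
            rw [hxe]
        have heq : (⟨n, σ⟩ : Pattern) = skewP onePat p' := by
          apply eq_of_contains
          · refine ⟨fun x => Fin.cast hcast x, fun a b hab => hab, ?_⟩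
            intro s t
            show σ s < σ t ↔ (skewPerm (1 : Equiv.Perm (Fin 1)) p'.2) (Fin.cast hcast s) <
              (skewPerm (1 : Equiv.Perm (Fin 1)) p'.2) (Fin.cast hcast t)
            rw [Fin.lt_def, Fin.lt_def, hvf s, hvf t]
          · show n = 1 + (n - 1)
            omega
        rw [heq]
        exact InX.skewL (ih p' hcont (by show 0 < n - 1; omega))
    · have hfpos : ∀ t : Fin n, 1 ≤ (f t : ℕ) := by
        intro t
        have h1 : f ⟨0, hne'⟩ ≤ f t := hf.monotone (by rw [Fin.le_def]; simp)
        rw [Fin.le_def] at h1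
        omega
      apply ih ⟨n, σ⟩ ?_ hne
      refine ⟨fun t => ⟨(f t : ℕ) - 1, by have := hfb t; have := hfpos t; omega⟩, ?_, ?_⟩
      · intro a b hab
        have h1 := hf hab
        rw [Fin.lt_def] at h1 ⊢
        simp only
        have := hfpos a
        omega
      · intro s t
        show σ s < σ t ↔ _
        rw [Fin.lt_def, Fin.lt_def, hord', skewLs _ _ (hfpos s), skewLs _ _ (hfpos t)]
  | @sumR r hr ih =>
    rintro ⟨n, σ⟩ ⟨f, hf, hord⟩ hne
    have hne' : 0 < n := hne
    have hNlt : n - 1 < n := by omega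
    have hfb : ∀ t : Fin n, (f t : ℕ) < r.1 + 1 := fun t => (f t).2
    have hord' : ∀ s t : Fin n, (σ s : ℕ) < (σ t : ℕ) ↔
        ((sumPerm r.2 (1 : Equiv.Perm (Fin 1))) (f s) : ℕ) <
        ((sumPerm r.2 (1 : Equiv.Perm (Fin 1))) (f t) : ℕ) := fun s t => hord s t
    by_cases h0 : (f ⟨n - 1, hNlt⟩ : ℕ) = r.1
    · have hflt : ∀ t : Fin n, t ≠ ⟨n - 1, hNlt⟩ → (f t : ℕ) < r.1 := by
        intro t ht
        have h1 : t < (⟨n - 1, hNlt⟩ : Fin n) := by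
          rw [Fin.lt_def]
          simp only
          have h2 : (t : ℕ) ≠ n - 1 := fun hh => ht (Fin.ext hh)
          have := t.2
          omega
        have h2 := hf h1
        rw [Fin.lt_def] at h2
        omega
      have hmax : ∀ t : Fin n, t ≠ ⟨n - 1, hNlt⟩ → (σ t : ℕ) < (σ ⟨n - 1, hNlt⟩ : ℕ) := by
        intro t ht
        rw [hord', sumRs _ _ (hflt t ht), sumRl _ (f ⟨n - 1, hNlt⟩) (not_lt.mpr h0.ge)]
        exact (r.2 _).2
      have hσN : (σ ⟨n - 1, hNlt⟩ : ℕ) = n - 1 := by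
        obtain ⟨t, ht⟩ := σ.surjective ⟨n - 1, hNlt⟩
        have hval := congrArg Fin.val ht
        simp only at hval
        by_cases hti : t = ⟨n - 1, hNlt⟩
        · rw [hti] at hval
          omega
        · have h2 := hmax t hti
          have h3 := (σ ⟨n - 1, hNlt⟩).2
          omega
      by_cases hn1 : n = 1
      · subst hn1
        rw [show (⟨1, σ⟩ : Pattern) = onePat from eq_onePat rfl]
        exact InX.base
      · have hn2 : 2 ≤ n := by omega
        have hb : ∀ j : Fin (n - 1), (j : ℕ) < n := fun j => by have := j.2; omega
        have hne0 : ∀ j : Fin (n - 1), (⟨(j : ℕ), hb j⟩ : Fin n) ≠ ⟨n - 1, hNlt⟩ := by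
          intro j hh
          have h1 := congrArg Fin.val hh
          have := j.2
          simp only at h1
          omega
        have hτb : ∀ j : Fin (n - 1), (σ ⟨(j : ℕ), hb j⟩ : ℕ) < n - 1 := by
          intro j
          have h2 := hmax _ (hne0 j)
          omega
        have hτinj : Function.Injective
            (fun j : Fin (n - 1) => (⟨(σ ⟨(j : ℕ), hb j⟩ : ℕ), hτb j⟩ : Fin (n - 1))) := by
          intro a b hab
          have hab' := congrArg Fin.val hab
          simp only at hab'
          have h3 : σ ⟨(a : ℕ), hb a⟩ = σ ⟨(b : ℕ), hb b⟩ := Fin.ext (by omega)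
          have h4 := congrArg Fin.val (σ.injective h3)
          simp only at h4
          exact Fin.ext (by omega)
        set p' : Pattern :=
          ⟨n - 1, Equiv.ofBijective _ (Finite.injective_iff_bijective.mp hτinj)⟩ with hp'def
        have hp'2 : ∀ j : Fin (n - 1), (p'.2 j : ℕ) = (σ ⟨(j : ℕ), hb j⟩ : ℕ) :=
          fun j => rfl
        have hgb : ∀ j : Fin (n - 1), (f ⟨(j : ℕ), hb j⟩ : ℕ) < r.1 :=
          fun j => hflt _ (hne0 j)
        have hcont : Contains p' r := by
          refine ⟨fun j => ⟨(f ⟨(j : ℕ), hb j⟩ : ℕ), hgb j⟩, ?_, ?_⟩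
          · intro a b hab
            rw [Fin.lt_def] at hab ⊢
            simp only
            have h1 : (⟨(a : ℕ), hb a⟩ : Fin n) < ⟨(b : ℕ), hb b⟩ := by
              rw [Fin.lt_def]; simp only; omega
            have h2 := hf h1
            rw [Fin.lt_def] at h2
            omega
          · intro s t
            rw [Fin.lt_def, Fin.lt_def, hp'2, hp'2]
            rw [hord', sumRs _ _ (hgb s), sumRs _ _ (hgb t)]
        have hcast : n = (n - 1) + 1 := by omega
        have hvf : ∀ x : Fin n,
            ((sumPerm p'.2 (1 : Equiv.Perm (Fin 1))) (Fin.cast hcast x) : ℕ) = (σ x : ℕ) := by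
          intro x
          by_cases hx : (x : ℕ) < n - 1
          · rw [sumRs _ _ (show ((Fin.cast hcast x : Fin ((n-1)+1)) : ℕ) < n - 1 from hx)]
            rw [hp'2]
            have hxe : (⟨((⟨((Fin.cast hcast x : Fin ((n-1)+1)) : ℕ), hx⟩ : Fin (n - 1)) : ℕ),
                hb _⟩ : Fin n) = x := Fin.ext rfl
            rw [hxe]
          · rw [sumRl _ _ (show ¬ ((Fin.cast hcast x : Fin ((n-1)+1)) : ℕ) < n - 1 from hx)]
            have hxe : x = ⟨n - 1, hNlt⟩ := Fin.ext (by have := x.2; simp only; omega)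
            rw [hxe, hσN]
        have heq : (⟨n, σ⟩ : Pattern) = sumP p' onePat := by
          apply eq_of_contains
          · refine ⟨fun x => Fin.cast hcast x, fun a b hab => hab, ?_⟩
            intro s t
            show σ s < σ t ↔ (sumPerm p'.2 (1 : Equiv.Perm (Fin 1))) (Fin.cast hcast s) <
              (sumPerm p'.2 (1 : Equiv.Perm (Fin 1))) (Fin.cast hcast t)
            rw [Fin.lt_def, Fin.lt_def, hvf s, hvf t]
          · show n = (n - 1) + 1
            omega
        rw [heq]
        exact InX.sumR (ih p' hcont (by show 0 < n - 1; omega))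
    · have hflt : ∀ t : Fin n, (f t : ℕ) < r.1 := by
        intro t
        have h1 : f t ≤ f ⟨n - 1, hNlt⟩ := hf.monotone (by rw [Fin.le_def]; simp only; have := t.2; omega)
        rw [Fin.le_def] at h1
        have := hfb ⟨n - 1, hNlt⟩
        omega
      apply ih ⟨n, σ⟩ ?_ hne
      refine ⟨fun t => ⟨(f t : ℕ), hflt t⟩, ?_, ?_⟩
      · intro a b hab
        have h1 := hf hab
        rw [Fin.lt_def] at h1 ⊢
        simp only
        omega
      · intro s t
        show σ s < σ t ↔ _
        rw [Fin.lt_def, Fin.lt_def, hord', sumRs _ _ (hflt s), sumRs _ _ (hflt t)]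
  | @skewR r hr ih =>
    rintro ⟨n, σ⟩ ⟨f, hf, hord⟩ hne
    have hne' : 0 < n := hne
    have hNlt : n - 1 < n := by omega
    have hfb : ∀ t : Fin n, (f t : ℕ) < r.1 + 1 := fun t => (f t).2
    have hord' : ∀ s t : Fin n, (σ s : ℕ) < (σ t : ℕ) ↔
        ((skewPerm r.2 (1 : Equiv.Perm (Fin 1))) (f s) : ℕ) <
        ((skewPerm r.2 (1 : Equiv.Perm (Fin 1))) (f t) : ℕ) := fun s t => hord s t
    by_cases h0 : (f ⟨n - 1, hNlt⟩ : ℕ) = r.1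
    · have hflt : ∀ t : Fin n, t ≠ ⟨n - 1, hNlt⟩ → (f t : ℕ) < r.1 := by
        intro t ht
        have h1 : t < (⟨n - 1, hNlt⟩ : Fin n) := by
          rw [Fin.lt_def]
          simp only
          have h2 : (t : ℕ) ≠ n - 1 := fun hh => ht (Fin.ext hh)
          have := t.2
          omega
        have h2 := hf h1
        rw [Fin.lt_def] at h2
        omega
      have hmin : ∀ t : Fin n, t ≠ ⟨n - 1, hNlt⟩ → (σ ⟨n - 1, hNlt⟩ : ℕ) < (σ t : ℕ) := by
        intro t ht
        rw [hord', skewRl _ (f ⟨n - 1, hNlt⟩) (not_lt.mpr h0.ge), skewRs _ _ (hflt t ht)]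
        omega
      have hσN : (σ ⟨n - 1, hNlt⟩ : ℕ) = 0 := by
        obtain ⟨t, ht⟩ := σ.surjective ⟨0, hne'⟩
        have hval := congrArg Fin.val ht
        simp only at hval
        by_cases hti : t = ⟨n - 1, hNlt⟩
        · rw [hti] at hval
          omega
        · have h2 := hmin t hti
          omega
      by_cases hn1 : n = 1
      · subst hn1
        rw [show (⟨1, σ⟩ : Pattern) = onePat from eq_onePat rfl]
        exact InX.base
      · have hn2 : 2 ≤ n := by omega
        have hb : ∀ j : Fin (n - 1), (j : ℕ) < n := fun j => by have := j.2; omega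
        have hne0 : ∀ j : Fin (n - 1), (⟨(j : ℕ), hb j⟩ : Fin n) ≠ ⟨n - 1, hNlt⟩ := by
          intro j hh
          have h1 := congrArg Fin.val hh
          have := j.2
          simp only at h1
          omega
        have hσpos : ∀ j : Fin (n - 1), 1 ≤ (σ ⟨(j : ℕ), hb j⟩ : ℕ) := by
          intro j
          have h2 := hmin _ (hne0 j)
          omega
        have hτb : ∀ j : Fin (n - 1), (σ ⟨(j : ℕ), hb j⟩ : ℕ) - 1 < n - 1 := by
          intro j
          have h1 := (σ ⟨(j : ℕ), hb j⟩).2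
          have h2 := hσpos j
          omega
        have hτinj : Function.Injective
            (fun j : Fin (n - 1) => (⟨(σ ⟨(j : ℕ), hb j⟩ : ℕ) - 1, hτb j⟩ : Fin (n - 1))) := by
          intro a b hab
          have hab' := congrArg Fin.val hab
          simp only at hab'
          have h1 := hσpos a
          have h2 := hσpos b
          have h3 : σ ⟨(a : ℕ), hb a⟩ = σ ⟨(b : ℕ), hb b⟩ := Fin.ext (by omega)
          have h4 := congrArg Fin.val (σ.injective h3)
          simp only at h4
          exact Fin.ext (by omega)
        set p' : Pattern :=
          ⟨n - 1, Equiv.ofBijective _ (Finite.injective_iff_bijective.mp hτinj)⟩ with hp'def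
        have hp'2 : ∀ j : Fin (n - 1), (p'.2 j : ℕ) = (σ ⟨(j : ℕ), hb j⟩ : ℕ) - 1 :=
          fun j => rfl
        have hgb : ∀ j : Fin (n - 1), (f ⟨(j : ℕ), hb j⟩ : ℕ) < r.1 :=
          fun j => hflt _ (hne0 j)
        have hcont : Contains p' r := by
          refine ⟨fun j => ⟨(f ⟨(j : ℕ), hb j⟩ : ℕ), hgb j⟩, ?_, ?_⟩
          · intro a b hab
            rw [Fin.lt_def] at hab ⊢
            simp only
            have h1 : (⟨(a : ℕ), hb a⟩ : Fin n) < ⟨(b : ℕ), hb b⟩ := by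
              rw [Fin.lt_def]; simp only; omega
            have h2 := hf h1
            rw [Fin.lt_def] at h2
            omega
          · intro s t
            rw [Fin.lt_def, Fin.lt_def, hp'2, hp'2]
            have hs1 := hσpos s
            have ht1 := hσpos t
            have e1 : (σ ⟨(s : ℕ), hb s⟩ : ℕ) - 1 < (σ ⟨(t : ℕ), hb t⟩ : ℕ) - 1 ↔
                (σ ⟨(s : ℕ), hb s⟩ : ℕ) < (σ ⟨(t : ℕ), hb t⟩ : ℕ) := by omega
            rw [e1, hord', skewRs _ _ (hgb s), skewRs _ _ (hgb t)]
            simp only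
            omega
        have hcast : n = (n - 1) + 1 := by omega
        have hvf : ∀ x : Fin n,
            ((skewPerm p'.2 (1 : Equiv.Perm (Fin 1))) (Fin.cast hcast x) : ℕ) = (σ x : ℕ) := by
          intro x
          by_cases hx : (x : ℕ) < n - 1
          · rw [skewRs _ _ (show ((Fin.cast hcast x : Fin ((n-1)+1)) : ℕ) < n - 1 from hx)]
            rw [hp'2]
            have hxe : (⟨((⟨((Fin.cast hcast x : Fin ((n-1)+1)) : ℕ), hx⟩ : Fin (n - 1)) : ℕ),
                hb _⟩ : Fin n) = x := Fin.ext rfl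
            rw [hxe]
            have h5 := hσpos ⟨(x : ℕ), hx⟩
            have hxe2 : (⟨((⟨(x : ℕ), hx⟩ : Fin (n - 1)) : ℕ), hb _⟩ : Fin n) = x := Fin.ext rfl
            rw [hxe2] at h5
            omega
          · rw [skewRl _ _ (show ¬ ((Fin.cast hcast x : Fin ((n-1)+1)) : ℕ) < n - 1 from hx)]
            have hxe : x = ⟨n - 1, hNlt⟩ := Fin.ext (by have := x.2; simp only; omega)
            rw [hxe, hσN]
        have heq : (⟨n, σ⟩ : Pattern) = skewP p' onePat := by
          apply eq_of_contains
          · refine ⟨fun x => Fin.cast hcast x, fun a b hab => hab, ?_⟩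
            intro s t
            show σ s < σ t ↔ (skewPerm p'.2 (1 : Equiv.Perm (Fin 1))) (Fin.cast hcast s) <
              (skewPerm p'.2 (1 : Equiv.Perm (Fin 1))) (Fin.cast hcast t)
            rw [Fin.lt_def, Fin.lt_def, hvf s, hvf t]
          · show n = (n - 1) + 1
            omega
        rw [heq]
        exact InX.skewR (ih p' hcont (by show 0 < n - 1; omega))
    · have hflt : ∀ t : Fin n, (f t : ℕ) < r.1 := by
        intro t
        have h1 : f t ≤ f ⟨n - 1, hNlt⟩ := hf.monotone (by rw [Fin.le_def]; simp only; have := t.2; omega)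
        rw [Fin.le_def] at h1
        have := hfb ⟨n - 1, hNlt⟩
        omega
      apply ih ⟨n, σ⟩ ?_ hne
      refine ⟨fun t => ⟨(f t : ℕ), hflt t⟩, ?_, ?_⟩
      · intro a b hab
        have h1 := hf hab
        rw [Fin.lt_def] at h1 ⊢
        simp only
        omega
      · intro s t
        show σ s < σ t ↔ _
        rw [Fin.lt_def, Fin.lt_def, hord', skewRs _ _ (hflt s), skewRs _ _ (hflt t)]
        simp only
        omega
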